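/- Assume m > c, let u* be the unique minimizer of Φ̃, y* = Hu* + d, and let (u_k) be generated by u_{k+1} = u_k − η F(u_k) with 0 < η < 2(m − c)/(L² − c²) and ρ = √(1 − 2mη + L²η²) + cη ∈ (0,1). Then limsup_{k→∞} ‖u_k − u*‖ ≤ η ‖(Hᵀ − H_diag) ∇Φ²(y*)‖ / (1 − ρ); in fact for every k ≥ 0, ‖u_k − u*‖ ≤ ρ^k ‖u₀ − u*‖ + η ‖(Hᵀ − H_diag) ∇Φ²(y*)‖ / (1 − ρ). -/

import Mathlib

open RealInnerProductSpace

/-- Largest singular value of a square matrix: the operator 2-norm of `v ↦ M v`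
on Euclidean space. -/
noncomputable def sigmaMax {N : ℕ} (M : Matrix (Fin N) (Fin N) ℝ) : ℝ :=
  ‖Matrix.toEuclideanCLM (𝕜 := ℝ) M‖

/-- Smallest singular value of a square matrix: the infimum of `‖M v‖` over the
unit sphere of Euclidean space. -/
noncomputable def sigmaMin {N : ℕ} (M : Matrix (Fin N) (Fin N) ℝ) : ℝ :=
  sInf ((fun v : EuclideanSpace ℝ (Fin N) => ‖Matrix.toEuclideanCLM (𝕜 := ℝ) M v‖) '' {v | ‖v‖ = 1})

/-- Matrix-vector multiplication as a map on Euclidean space. -/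
noncomputable def mulV {N : ℕ} (M : Matrix (Fin N) (Fin N) ℝ) (v : EuclideanSpace ℝ (Fin N)) :
    EuclideanSpace ℝ (Fin N) :=
  Matrix.toEuclideanCLM (𝕜 := ℝ) M v

set_option maxHeartbeats 1000000
set_option synthInstance.maxHeartbeats 400000

namespace Stmt6Aux

variable {N : ℕ}

lemma mulV_le (M : Matrix (Fin N) (Fin N) ℝ) (v : EuclideanSpace ℝ (Fin N)) :
    ‖mulV M v‖ ≤ sigmaMax M * ‖v‖ :=
  ContinuousLinearMap.le_opNorm _ v

lemma sigmaMax_nonneg (M : Matrix (Fin N) (Fin N) ℝ) : 0 ≤ sigmaMax M := norm_nonneg _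

lemma mulV_sub (M : Matrix (Fin N) (Fin N) ℝ) (a b : EuclideanSpace ℝ (Fin N)) :
    mulV M (a - b) = mulV M a - mulV M b := map_sub _ a b

lemma mulV_msub (M M' : Matrix (Fin N) (Fin N) ℝ) (v : EuclideanSpace ℝ (Fin N)) :
    mulV (M - M') v = mulV M v - mulV M' v := by
  simp [mulV, map_sub]

lemma mulV_transpose_inner (M : Matrix (Fin N) (Fin N) ℝ) (a b : EuclideanSpace ℝ (Fin N)) :
    ⟪mulV M.transpose a, b⟫ = ⟪a, mulV M b⟫ := by
  simp only [mulV, PiLp.inner_apply, RCLike.inner_apply, conj_trivial]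
  show dotProduct b.ofLp (M.transpose.mulVec a.ofLp) = dotProduct (M.mulVec b.ofLp) a.ofLp
  rw [dotProduct_comm, dotProduct_comm (M.mulVec _), Matrix.mulVec_transpose, Matrix.dotProduct_mulVec]

lemma toEuclideanCLM_transpose (M : Matrix (Fin N) (Fin N) ℝ) :
    Matrix.toEuclideanCLM (𝕜 := ℝ) M.transpose =
      ContinuousLinearMap.adjoint (Matrix.toEuclideanCLM (𝕜 := ℝ) M) := by
  rw [ContinuousLinearMap.eq_adjoint_iff]
  intro x y
  exact mulV_transpose_inner M x y

lemma sigmaMax_transpose (M : Matrix (Fin N) (Fin N) ℝ) :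
    sigmaMax M.transpose = sigmaMax M := by
  unfold sigmaMax
  rw [toEuclideanCLM_transpose]
  exact LinearIsometryEquiv.norm_map ContinuousLinearMap.adjoint _

lemma sigmaMin_nonneg (M : Matrix (Fin N) (Fin N) ℝ) : 0 ≤ sigmaMin M :=
  Real.sInf_nonneg (by rintro x ⟨v, _, rfl⟩; exact norm_nonneg _)

lemma sigmaMin_mul_le (M : Matrix (Fin N) (Fin N) ℝ) (v : EuclideanSpace ℝ (Fin N)) :
    sigmaMin M * ‖v‖ ≤ ‖mulV M v‖ := by
  rcases eq_or_ne v 0 with rfl | hv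
  · simp [mulV]
  · have hn : ‖v‖ ≠ 0 := norm_ne_zero_iff.mpr hv
    have hnn : (0:ℝ) < ‖v‖ := norm_pos_iff.mpr hv
    set w : EuclideanSpace ℝ (Fin N) := ‖v‖⁻¹ • v with hw
    have hw1 : ‖w‖ = 1 := by
      rw [hw, norm_smul, Real.norm_eq_abs, abs_of_nonneg (inv_nonneg.mpr (norm_nonneg v)),
        inv_mul_cancel₀ hn]
    have h1 : sigmaMin M ≤ ‖mulV M w‖ := by
      apply csInf_le
      · exact ⟨0, by rintro x ⟨u, _, rfl⟩; exact norm_nonneg _⟩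
      · exact ⟨w, hw1, rfl⟩
    have h2 : ‖mulV M v‖ = ‖v‖ * ‖mulV M w‖ := by
      rw [hw]
      simp only [mulV, map_smul, norm_smul, Real.norm_eq_abs,
        abs_of_nonneg (inv_nonneg.mpr (norm_nonneg v))]
      field_simp
    rw [h2]
    calc sigmaMin M * ‖v‖ ≤ ‖mulV M w‖ * ‖v‖ := by
          exact mul_le_mul_of_nonneg_right h1 (norm_nonneg v)
      _ = ‖v‖ * ‖mulV M w‖ := mul_comm _ _

lemma sigmaMin_le_sigmaMax (hN : 0 < N) (M : Matrix (Fin N) (Fin N) ℝ) :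
    sigmaMin M ≤ sigmaMax M := by
  obtain ⟨v, hv⟩ : ∃ v : EuclideanSpace ℝ (Fin N), ‖v‖ = 1 :=
    ⟨EuclideanSpace.single ⟨0, hN⟩ (1:ℝ), by simp⟩
  calc sigmaMin M ≤ ‖mulV M v‖ := by
        exact csInf_le ⟨0, by rintro x ⟨u, _, rfl⟩; exact norm_nonneg _⟩ ⟨v, hv, rfl⟩
    _ ≤ sigmaMax M * ‖v‖ := mulV_le _ _
    _ = sigmaMax M := by rw [hv, mul_one]

lemma hasGradient_comp (H : Matrix (Fin N) (Fin N) ℝ) (d : EuclideanSpace ℝ (Fin N))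
    (Φ1 Φ2 : EuclideanSpace ℝ (Fin N) → ℝ)
    (hΦ1 : Differentiable ℝ Φ1) (hΦ2 : Differentiable ℝ Φ2) (x : EuclideanSpace ℝ (Fin N)) :
    HasGradientAt (fun u => Φ1 u + Φ2 (mulV H u + d))
      (gradient Φ1 x + mulV H.transpose (gradient Φ2 (mulV H x + d))) x := by
  rw [hasGradientAt_iff_hasFDerivAt]
  set T := Matrix.toEuclideanCLM (𝕜 := ℝ) H with hT
  have h1 : HasFDerivAt Φ1
      (InnerProductSpace.toDual ℝ _ (gradient Φ1 x)) x :=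
    ((hΦ1 x).hasGradientAt).hasFDerivAt
  have haff : HasFDerivAt (fun u : EuclideanSpace ℝ (Fin N) => mulV H u + d) T x :=
    (T.hasFDerivAt).add_const d
  have h2 : HasFDerivAt Φ2
      (InnerProductSpace.toDual ℝ _ (gradient Φ2 (mulV H x + d))) (mulV H x + d) :=
    ((hΦ2 _).hasGradientAt).hasFDerivAt
  have hsum := h1.add (h2.comp x haff)
  have heq : InnerProductSpace.toDual ℝ (EuclideanSpace ℝ (Fin N))
      (gradient Φ1 x + mulV H.transpose (gradient Φ2 (mulV H x + d))) =
      InnerProductSpace.toDual ℝ _ (gradient Φ1 x) +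
        (InnerProductSpace.toDual ℝ _ (gradient Φ2 (mulV H x + d))).comp T := by
    ext v
    simp only [InnerProductSpace.toDual_apply_apply, ContinuousLinearMap.add_apply,
      ContinuousLinearMap.coe_comp', Function.comp_apply]
    rw [inner_add_left, mulV_transpose_inner]
    rfl
  rw [heq]
  exact hsum

variable {E : Type*} [NormedAddCommGroup E] [InnerProductSpace ℝ E]

lemma contract (G : E → E) (m L η : ℝ) (hη0 : 0 < η)
    (hq0 : 0 ≤ 1 - 2 * m * η + L ^ 2 * η ^ 2) (a b : E)
    (hmono : m * ‖a - b‖ ^ 2 ≤ ⟪G a - G b, a - b⟫)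
    (hlip : ‖G a - G b‖ ≤ L * ‖a - b‖) :
    ‖(a - η • G a) - (b - η • G b)‖ ≤
      Real.sqrt (1 - 2 * m * η + L ^ 2 * η ^ 2) * ‖a - b‖ := by
  set q : ℝ := 1 - 2 * m * η + L ^ 2 * η ^ 2 with hq
  have hxw : (a - η • G a) - (b - η • G b) = (a - b) - η • (G a - G b) := by
    rw [smul_sub]; abel
  have hnsq : ‖η • (G a - G b)‖ ^ 2 = η ^ 2 * ‖G a - G b‖ ^ 2 := by
    rw [norm_smul, Real.norm_eq_abs, mul_pow, sq_abs]
  have hexp : ‖(a - b) - η • (G a - G b)‖ ^ 2 =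
      ‖a - b‖ ^ 2 - 2 * (η * ⟪a - b, G a - G b⟫) + η ^ 2 * ‖G a - G b‖ ^ 2 := by
    rw [norm_sub_sq_real, real_inner_smul_right, hnsq]
  have h1 : m * ‖a - b‖ ^ 2 ≤ ⟪a - b, G a - G b⟫ := by
    rw [real_inner_comm]; exact hmono
  have h2' : ‖G a - G b‖ ^ 2 ≤ L ^ 2 * ‖a - b‖ ^ 2 := by
    nlinarith [norm_nonneg (G a - G b), norm_nonneg (a - b)]
  have hsq : ‖(a - b) - η • (G a - G b)‖ ^ 2 ≤ q * ‖a - b‖ ^ 2 := by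
    rw [hexp, hq]
    have e1 : 2 * η * (m * ‖a - b‖ ^ 2) ≤ 2 * η * ⟪a - b, G a - G b⟫ :=
      mul_le_mul_of_nonneg_left h1 (by linarith)
    have e2 : η ^ 2 * ‖G a - G b‖ ^ 2 ≤ η ^ 2 * (L ^ 2 * ‖a - b‖ ^ 2) :=
      mul_le_mul_of_nonneg_left h2' (sq_nonneg η)
    nlinarith [e1, e2]
  calc ‖(a - η • G a) - (b - η • G b)‖
      = Real.sqrt (‖(a - b) - η • (G a - G b)‖ ^ 2) := by
        rw [hxw, Real.sqrt_sq (norm_nonneg _)]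
    _ ≤ Real.sqrt (q * ‖a - b‖ ^ 2) := Real.sqrt_le_sqrt hsq
    _ = Real.sqrt q * ‖a - b‖ := by
        rw [Real.sqrt_mul hq0, Real.sqrt_sq (norm_nonneg _)]

lemma Gmono (H : Matrix (Fin N) (Fin N) ℝ) (d : EuclideanSpace ℝ (Fin N))
    (Φ1 Φ2 : EuclideanSpace ℝ (Fin N) → ℝ) (mu my : ℝ) (hmy : 0 ≤ my)
    (hΦ1mono : ∀ a b, mu * ‖a - b‖ ^ 2 ≤ ⟪gradient Φ1 a - gradient Φ1 b, a - b⟫)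
    (hΦ2mono : ∀ a b, my * ‖a - b‖ ^ 2 ≤ ⟪gradient Φ2 a - gradient Φ2 b, a - b⟫)
    (a b : EuclideanSpace ℝ (Fin N)) :
    (mu + sigmaMin H ^ 2 * my) * ‖a - b‖ ^ 2 ≤
      ⟪(gradient Φ1 a + mulV H.transpose (gradient Φ2 (mulV H a + d))) -
        (gradient Φ1 b + mulV H.transpose (gradient Φ2 (mulV H b + d))), a - b⟫ := by
  have hsplit : (gradient Φ1 a + mulV H.transpose (gradient Φ2 (mulV H a + d))) -
      (gradient Φ1 b + mulV H.transpose (gradient Φ2 (mulV H b + d))) =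
      (gradient Φ1 a - gradient Φ1 b) +
        mulV H.transpose (gradient Φ2 (mulV H a + d) - gradient Φ2 (mulV H b + d)) := by
    rw [mulV_sub]; abel
  have harg : mulV H a + d - (mulV H b + d) = mulV H (a - b) := by
    rw [mulV_sub]; abel
  have h1 := hΦ1mono a b
  have h2 := hΦ2mono (mulV H a + d) (mulV H b + d)
  rw [harg] at h2
  have h3 : sigmaMin H * ‖a - b‖ ≤ ‖mulV H (a - b)‖ := sigmaMin_mul_le H _
  have hA : sigmaMin H ^ 2 * ‖a - b‖ ^ 2 ≤ ‖mulV H (a - b)‖ ^ 2 := by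
    have := mul_self_le_mul_self (mul_nonneg (sigmaMin_nonneg H) (norm_nonneg (a - b))) h3
    nlinarith [this]
  have hB : sigmaMin H ^ 2 * my * ‖a - b‖ ^ 2 ≤ my * ‖mulV H (a - b)‖ ^ 2 := by
    nlinarith [mul_le_mul_of_nonneg_left hA hmy]
  rw [hsplit, inner_add_left, mulV_transpose_inner]
  linarith [h1, h2, hB]

lemma Glip (H : Matrix (Fin N) (Fin N) ℝ) (d : EuclideanSpace ℝ (Fin N))
    (Φ1 Φ2 : EuclideanSpace ℝ (Fin N) → ℝ) (Lu Ly : ℝ) (hLy : 0 ≤ Ly)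
    (hΦ1lip : ∀ a b, ‖gradient Φ1 a - gradient Φ1 b‖ ≤ Lu * ‖a - b‖)
    (hΦ2lip : ∀ a b, ‖gradient Φ2 a - gradient Φ2 b‖ ≤ Ly * ‖a - b‖)
    (a b : EuclideanSpace ℝ (Fin N)) :
    ‖(gradient Φ1 a + mulV H.transpose (gradient Φ2 (mulV H a + d))) -
        (gradient Φ1 b + mulV H.transpose (gradient Φ2 (mulV H b + d)))‖ ≤
      (Lu + sigmaMax H ^ 2 * Ly) * ‖a - b‖ := by
  have hsplit : (gradient Φ1 a + mulV H.transpose (gradient Φ2 (mulV H a + d))) -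
      (gradient Φ1 b + mulV H.transpose (gradient Φ2 (mulV H b + d))) =
      (gradient Φ1 a - gradient Φ1 b) +
        mulV H.transpose (gradient Φ2 (mulV H a + d) - gradient Φ2 (mulV H b + d)) := by
    rw [mulV_sub]; abel
  have harg : mulV H a + d - (mulV H b + d) = mulV H (a - b) := by
    rw [mulV_sub]; abel
  have h1 := hΦ1lip a b
  have h2 := hΦ2lip (mulV H a + d) (mulV H b + d)
  rw [harg] at h2
  have h3 : ‖mulV H.transpose (gradient Φ2 (mulV H a + d) - gradient Φ2 (mulV H b + d))‖ ≤
      sigmaMax H * ‖gradient Φ2 (mulV H a + d) - gradient Φ2 (mulV H b + d)‖ := by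
    have := mulV_le H.transpose (gradient Φ2 (mulV H a + d) - gradient Φ2 (mulV H b + d))
    rwa [sigmaMax_transpose] at this
  have h4 : ‖mulV H (a - b)‖ ≤ sigmaMax H * ‖a - b‖ := mulV_le H _
  have h5 : ‖gradient Φ2 (mulV H a + d) - gradient Φ2 (mulV H b + d)‖ ≤
      Ly * (sigmaMax H * ‖a - b‖) := h2.trans (mul_le_mul_of_nonneg_left h4 hLy)
  have h6 : ‖mulV H.transpose (gradient Φ2 (mulV H a + d) - gradient Φ2 (mulV H b + d))‖ ≤
      sigmaMax H * (Ly * (sigmaMax H * ‖a - b‖)) :=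
    h3.trans (mul_le_mul_of_nonneg_left h5 (sigmaMax_nonneg H))
  calc ‖(gradient Φ1 a + mulV H.transpose (gradient Φ2 (mulV H a + d))) -
        (gradient Φ1 b + mulV H.transpose (gradient Φ2 (mulV H b + d)))‖
      ≤ ‖gradient Φ1 a - gradient Φ1 b‖ +
          ‖mulV H.transpose (gradient Φ2 (mulV H a + d) - gradient Φ2 (mulV H b + d))‖ := by
        rw [hsplit]; exact norm_add_le _ _
    _ ≤ (Lu + sigmaMax H ^ 2 * Ly) * ‖a - b‖ := by nlinarith [h1, h6]


end Stmt6Aux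

/-- asymptotic sub-optimality of the decentralized closed loop.
Under `m > c`, for `0 < η < 2(m−c)/(L²−c²)` with `ρ = √(1 − 2mη + L²η²) + cη ∈ (0,1)`,
the iterates of `u_{k+1} = u_k − η F(u_k)` satisfy, for every `k`,
`‖u_k − u*‖ ≤ ρ^k ‖u₀ − u*‖ + η‖(Hᵀ − H_diag)∇Φ²(y*)‖/(1 − ρ)`; in particular
`limsup_k ‖u_k − u*‖ ≤ η‖(Hᵀ − H_diag)∇Φ²(y*)‖/(1 − ρ)`. -/
theorem stmt6 {N : ℕ} (hN : 0 < N)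
(H : Matrix (Fin N) (Fin N) ℝ) (d : EuclideanSpace ℝ (Fin N))
    (Φ1 Φ2 : EuclideanSpace ℝ (Fin N) → ℝ)
    (mu Lu my Ly : ℝ)
    (hmu : 0 < mu) (hmuLu : mu ≤ Lu) (hmy : 0 < my) (hmyLy : my ≤ Ly)
    (hΦ1diff : Differentiable ℝ Φ1) (hΦ2diff : Differentiable ℝ Φ2)
    (hΦ1mono : ∀ a b, mu * ‖a - b‖ ^ 2 ≤ ⟪gradient Φ1 a - gradient Φ1 b, a - b⟫)
    (hΦ1lip : ∀ a b, ‖gradient Φ1 a - gradient Φ1 b‖ ≤ Lu * ‖a - b‖)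
    (hΦ2mono : ∀ a b, my * ‖a - b‖ ^ 2 ≤ ⟪gradient Φ2 a - gradient Φ2 b, a - b⟫)
    (hΦ2lip : ∀ a b, ‖gradient Φ2 a - gradient Φ2 b‖ ≤ Ly * ‖a - b‖)
    (Hdiag : Matrix (Fin N) (Fin N) ℝ)
    (hHdiag : Hdiag = Matrix.diagonal (fun i => H i i))
    (F : EuclideanSpace ℝ (Fin N) → EuclideanSpace ℝ (Fin N))
    (hF : ∀ u, F u = gradient Φ1 u + mulV Hdiag (gradient Φ2 (mulV H u + d)))
    (m c L : ℝ)
    (hm : m = mu + sigmaMin H ^ 2 * my)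
    (hc : c = sigmaMax (H - Hdiag) * sigmaMax H * Ly)
    (hL : L = Lu + sigmaMax H ^ 2 * Ly)
    (hmc : m > c)
    (ustar ystar : EuclideanSpace ℝ (Fin N))
    (hustar : ∀ u, Φ1 ustar + Φ2 (mulV H ustar + d) ≤ Φ1 u + Φ2 (mulV H u + d))
    (hystar : ystar = mulV H ustar + d)
    (η : ℝ) (hη0 : 0 < η) (hη1 : η < 2 * (m - c) / (L ^ 2 - c ^ 2))
    (ρ : ℝ) (hρ : ρ = Real.sqrt (1 - 2 * m * η + L ^ 2 * η ^ 2) + c * η)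
    (hρ0 : 0 < ρ) (hρ1 : ρ < 1)
    (u : ℕ → EuclideanSpace ℝ (Fin N))
    (hiter : ∀ k, u (k + 1) = u k - η • F (u k)) :
    (∀ k : ℕ,
      ‖u k - ustar‖ ≤
        ρ ^ k * ‖u 0 - ustar‖ +
          η * ‖mulV (H.transpose - Hdiag) (gradient Φ2 ystar)‖ / (1 - ρ)) ∧
      Filter.limsup (fun k : ℕ => ‖u k - ustar‖) Filter.atTop ≤
        η * ‖mulV (H.transpose - Hdiag) (gradient Φ2 ystar)‖ / (1 - ρ) := by
  
  classical
  set G : EuclideanSpace ℝ (Fin N) → EuclideanSpace ℝ (Fin N) :=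
    fun v => gradient Φ1 v + mulV H.transpose (gradient Φ2 (mulV H v + d)) with hGdef
  set D : Matrix (Fin N) (Fin N) ℝ := H.transpose - Hdiag with hD
  set gs : EuclideanSpace ℝ (Fin N) := gradient Φ2 ystar with hgs
  set b : ℝ := ‖mulV D gs‖ with hb
  have hb0 : 0 ≤ b := norm_nonneg _
  have h1ρ : 0 < 1 - ρ := by linarith
  set C : ℝ := η * b / (1 - ρ) with hC
  have hC0 : 0 ≤ C := by rw [hC]; positivity
  have hCfix : ρ * C + η * b = C := by
    rw [hC]
    field_simp
    ring
  -- basic singular value facts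
  have hsmin0 : 0 ≤ sigmaMin H := Stmt6Aux.sigmaMin_nonneg H
  have hsmax0 : 0 ≤ sigmaMax H := Stmt6Aux.sigmaMax_nonneg H
  have hminmax : sigmaMin H ≤ sigmaMax H := Stmt6Aux.sigmaMin_le_sigmaMax hN H
  have hmL : m ≤ L := by
    rw [hm, hL]
    have h1 : sigmaMin H ^ 2 ≤ sigmaMax H ^ 2 := by nlinarith
    nlinarith
  have hm0 : 0 < m := by
    rw [hm]
    have : 0 ≤ sigmaMin H ^ 2 * my := by positivity
    linarith
  -- σmax D = σmax (H - Hdiag)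
  have hDT : D = (H - Hdiag).transpose := by
    rw [hD, Matrix.transpose_sub, hHdiag, Matrix.diagonal_transpose]
  have hsD : sigmaMax D = sigmaMax (H - Hdiag) := by
    rw [hDT, Stmt6Aux.sigmaMax_transpose]
  -- monotonicity of G
  have hGmono : ∀ a b', m * ‖a - b'‖ ^ 2 ≤ ⟪G a - G b', a - b'⟫ := by
    intro a b'
    rw [hm, hGdef]
    exact Stmt6Aux.Gmono H d Φ1 Φ2 mu my hmy.le hΦ1mono hΦ2mono a b'
  -- Lipschitz property of G
  have hGlip : ∀ a b', ‖G a - G b'‖ ≤ L * ‖a - b'‖ := by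
    intro a b'
    rw [hL, hGdef]
    exact Stmt6Aux.Glip H d Φ1 Φ2 Lu Ly (by linarith) hΦ1lip hΦ2lip a b'
  -- contraction factor
  set q : ℝ := 1 - 2 * m * η + L ^ 2 * η ^ 2 with hq
  have hq0 : 0 ≤ q := by
    have h : q = (1 - L * η) ^ 2 + 2 * η * (L - m) := by rw [hq]; ring
    nlinarith [sq_nonneg (1 - L * η)]
  have hρs : ρ = Real.sqrt q + c * η := hρ
  have key : ∀ a b', ‖(a - η • G a) - (b' - η • G b')‖ ≤ Real.sqrt q * ‖a - b'‖ :=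
    fun a b' => Stmt6Aux.contract G m L η hη0 hq0 a b' (hGmono a b') (hGlip a b')
  -- gradient of the total objective vanishes at ustar
  have hmin : IsLocalMin (fun v => Φ1 v + Φ2 (mulV H v + d)) ustar :=
    Filter.Eventually.of_forall hustar
  have hGs : G ustar = 0 := by
    have hgr := Stmt6Aux.hasGradient_comp H d Φ1 Φ2 hΦ1diff hΦ2diff ustar
    have h0 := hmin.hasFDerivAt_eq_zero hgr.hasFDerivAt
    set g : EuclideanSpace ℝ (Fin N) :=
      gradient Φ1 ustar + mulV H.transpose (gradient Φ2 (mulV H ustar + d)) with hg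
    have hz : ⟪g, g⟫ = 0 := by
      have h1 := congrArg (fun T : EuclideanSpace ℝ (Fin N) →L[ℝ] ℝ => T g) h0
      simpa [InnerProductSpace.toDual_apply_apply] using h1
    exact inner_self_eq_zero.mp hz
  -- F in terms of G
  have hFG : ∀ v, F v = G v - mulV D (gradient Φ2 (mulV H v + d)) := by
    intro v
    rw [hF, hGdef]
    simp only
    rw [hD, Stmt6Aux.mulV_msub]
    abel
  -- one-step estimate
  have step : ∀ k, ‖u (k + 1) - ustar‖ ≤ ρ * ‖u k - ustar‖ + η * b := by
    intro k
    set gk : EuclideanSpace ℝ (Fin N) := gradient Φ2 (mulV H (u k) + d) with hgk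
    have hdec : u (k + 1) - ustar =
        ((u k - η • G (u k)) - (ustar - η • G ustar)) + η • mulV D gs
          + η • (mulV D gk - mulV D gs) := by
      rw [hiter k, hFG (u k), hGs, ← hgk]
      rw [smul_sub, smul_sub, smul_zero]
      abel
    have hmid : ‖η • mulV D gs‖ = η * b := by
      rw [norm_smul, Real.norm_eq_abs, abs_of_pos hη0, hb]
    have harg : mulV H (u k) + d - ystar = mulV H (u k - ustar) := by
      rw [hystar, Stmt6Aux.mulV_sub]; abel
    have hlast : ‖η • (mulV D gk - mulV D gs)‖ ≤ η * (c * ‖u k - ustar‖) := by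
      rw [norm_smul, Real.norm_eq_abs, abs_of_pos hη0]
      have e0 : mulV D gk - mulV D gs = mulV D (gk - gs) := (Stmt6Aux.mulV_sub D gk gs).symm
      rw [e0]
      have e1 : ‖mulV D (gk - gs)‖ ≤ sigmaMax D * ‖gk - gs‖ := Stmt6Aux.mulV_le D _
      have e2 : ‖gk - gs‖ ≤ Ly * ‖mulV H (u k - ustar)‖ := by
        have := hΦ2lip (mulV H (u k) + d) ystar
        rw [harg] at this
        exact this
      have e3 : ‖mulV H (u k - ustar)‖ ≤ sigmaMax H * ‖u k - ustar‖ := Stmt6Aux.mulV_le H _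
      have hsD0 : 0 ≤ sigmaMax D := Stmt6Aux.sigmaMax_nonneg D
      have hcc : c = sigmaMax D * sigmaMax H * Ly := by rw [hc, hsD]
      rw [hcc]
      have e4 : sigmaMax D * ‖gk - gs‖ ≤ sigmaMax D * (Ly * ‖mulV H (u k - ustar)‖) :=
        mul_le_mul_of_nonneg_left e2 hsD0
      have e5 : sigmaMax D * (Ly * ‖mulV H (u k - ustar)‖) ≤
          sigmaMax D * (Ly * (sigmaMax H * ‖u k - ustar‖)) := by
        apply mul_le_mul_of_nonneg_left _ hsD0
        exact mul_le_mul_of_nonneg_left e3 (by linarith)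
      have e6 := le_trans e1 (le_trans e4 e5)
      calc η * ‖mulV D (gk - gs)‖
          ≤ η * (sigmaMax D * (Ly * (sigmaMax H * ‖u k - ustar‖))) :=
            mul_le_mul_of_nonneg_left e6 hη0.le
        _ = η * (sigmaMax D * sigmaMax H * Ly * ‖u k - ustar‖) := by ring
    calc ‖u (k + 1) - ustar‖
        ≤ ‖(u k - η • G (u k)) - (ustar - η • G ustar)‖ + ‖η • mulV D gs‖
            + ‖η • (mulV D gk - mulV D gs)‖ := by
          rw [hdec]
          have t1 := norm_add_le ((u k - η • G (u k)) - (ustar - η • G ustar) + η • mulV D gs)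
            (η • (mulV D gk - mulV D gs))
          have t2 := norm_add_le ((u k - η • G (u k)) - (ustar - η • G ustar)) (η • mulV D gs)
          linarith
      _ ≤ Real.sqrt q * ‖u k - ustar‖ + η * b + η * (c * ‖u k - ustar‖) := by
          rw [hmid]
          linarith [key (u k) ustar, hlast]
      _ = ρ * ‖u k - ustar‖ + η * b := by rw [hρs]; ring
  -- induction
  have main : ∀ k, ‖u k - ustar‖ ≤ ρ ^ k * ‖u 0 - ustar‖ + C := by
    intro k
    induction k with
    | zero => simp [hC0, le_add_iff_nonneg_right]
    | succ n ih =>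
      calc ‖u (n + 1) - ustar‖ ≤ ρ * ‖u n - ustar‖ + η * b := step n
        _ ≤ ρ * (ρ ^ n * ‖u 0 - ustar‖ + C) + η * b := by
            have := mul_le_mul_of_nonneg_left ih hρ0.le
            linarith
        _ = ρ ^ (n + 1) * ‖u 0 - ustar‖ + (ρ * C + η * b) := by ring
        _ = ρ ^ (n + 1) * ‖u 0 - ustar‖ + C := by rw [hCfix]
  -- limsup bound
  have htend : Filter.Tendsto (fun k : ℕ => ρ ^ k * ‖u 0 - ustar‖ + C)
      Filter.atTop (nhds C) := by
    have h0 : Filter.Tendsto (fun k : ℕ => ρ ^ k) Filter.atTop (nhds 0) :=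
      tendsto_pow_atTop_nhds_zero_of_lt_one hρ0.le hρ1
    have := (h0.mul_const (‖u 0 - ustar‖)).add_const C
    simpa using this
  have hls : Filter.limsup (fun k : ℕ => ‖u k - ustar‖) Filter.atTop ≤ C := by
    have h1 : Filter.limsup (fun k : ℕ => ‖u k - ustar‖) Filter.atTop ≤
        Filter.limsup (fun k : ℕ => ρ ^ k * ‖u 0 - ustar‖ + C) Filter.atTop := by
      exact Filter.limsup_le_limsup (Filter.Eventually.of_forall main)
        (Filter.isCoboundedUnder_le_of_le Filter.atTop (fun k => norm_nonneg _))
        htend.isBoundedUnder_le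
    rw [htend.limsup_eq] at h1
    exact h1
  exact ⟨main, hls⟩
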